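/- (Gini's gamma for the bivariate normal copula.) For every ρ ∈ (−1,1), define γ(ρ) = 4·(∫₀¹ C(u,u;ρ) du + ∫₀¹ C(u,1−u;ρ) du − 1/2), where C(u,v;ρ) = Φ₂(Φ⁻¹(u),Φ⁻¹(v);ρ). Then γ(ρ) = (2/π)·(arcsin((1+ρ)/2) − arcsin((1−ρ)/2)), and equivalently γ(ρ) = (4/π)·(arcsin(√(1+ρ)/2) − arcsin(√(1−ρ)/2)). -/

import Mathlib

open MeasureTheory Real Set Filter

/-- Standard normal density φ. -/
noncomputable def stdPdf (x : ℝ) : ℝ :=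
  (1 / Real.sqrt (2 * Real.pi)) * Real.exp (-x ^ 2 / 2)

/-- Standard normal distribution function Φ. -/
noncomputable def stdCdf (h : ℝ) : ℝ := ∫ x in Set.Iio h, stdPdf x

/-- Inverse Φ⁻¹ of the standard normal distribution function (on (0,1)). -/
noncomputable def stdQuantile : ℝ → ℝ := Function.invFun stdCdf

/-- Bivariate standard normal density φ₂ with correlation ρ. -/
noncomputable def binPdf (x y ρ : ℝ) : ℝ :=
  (1 / (2 * Real.pi * Real.sqrt (1 - ρ ^ 2))) *
    Real.exp (-(x ^ 2 - 2 * ρ * x * y + y ^ 2) / (2 * (1 - ρ ^ 2)))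

/-- Bivariate standard normal distribution function Φ₂. -/
noncomputable def binCdf (h k ρ : ℝ) : ℝ :=
  ∫ x in Set.Iio h, ∫ y in Set.Iio k, binPdf x y ρ

/-- The bivariate normal copula C(u,v;ρ) = Φ₂(Φ⁻¹(u),Φ⁻¹(v);ρ). -/
noncomputable def normCopula (u v ρ : ℝ) : ℝ :=
  binCdf (stdQuantile u) (stdQuantile v) ρ

/-- g(u;ρ) = Φ(√((1−ρ)/(1+ρ))·Φ⁻¹(u)). -/
noncomputable def gFun (u ρ : ℝ) : ℝ :=
  stdCdf (Real.sqrt ((1 - ρ) / (1 + ρ)) * stdQuantile u)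


lemma stdPdf_eq (x : ℝ) : stdPdf x = (1 / Real.sqrt (2 * Real.pi)) * Real.exp (-(1/2 : ℝ) * x ^ 2) := by
  unfold stdPdf; congr 1; congr 1; ring

lemma stdPdf_pos (x : ℝ) : 0 < stdPdf x := by
  unfold stdPdf
  positivity

lemma stdPdf_nonneg (x : ℝ) : 0 ≤ stdPdf x := (stdPdf_pos x).le

lemma continuous_stdPdf : Continuous stdPdf := by
  unfold stdPdf; fun_prop

lemma integrable_stdPdf : Integrable stdPdf := by
  have : stdPdf = fun x => (1 / Real.sqrt (2 * Real.pi)) * Real.exp (-(1/2 : ℝ) * x ^ 2) := by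
    funext x; exact stdPdf_eq x
  rw [this]
  exact (integrable_exp_neg_mul_sq (by norm_num : (0:ℝ) < 1/2)).const_mul _

lemma stdPdf_le (x : ℝ) : stdPdf x ≤ 1 / Real.sqrt (2 * Real.pi) := by
  unfold stdPdf
  have h1 : Real.exp (-x ^ 2 / 2) ≤ 1 := by
    rw [Real.exp_le_one_iff]; nlinarith [sq_nonneg x]
  have h2 : (0:ℝ) ≤ 1 / Real.sqrt (2 * Real.pi) := by positivity
  calc 1 / Real.sqrt (2 * Real.pi) * Real.exp (-x ^ 2 / 2)
      ≤ 1 / Real.sqrt (2 * Real.pi) * 1 := by exact mul_le_mul_of_nonneg_left h1 h2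
    _ = 1 / Real.sqrt (2 * Real.pi) := by ring

lemma integral_stdPdf : ∫ x, stdPdf x = 1 := by
  simp_rw [stdPdf_eq]
  rw [MeasureTheory.integral_const_mul, integral_gaussian]
  rw [show Real.pi / (1/2) = 2 * Real.pi by ring]
  rw [div_mul_cancel₀]
  positivity

lemma stdCdf_eq_Iic (h : ℝ) : stdCdf h = ∫ x in Set.Iic h, stdPdf x :=
  setIntegral_congr_set Iio_ae_eq_Iic

lemma stdCdf_nonneg (h : ℝ) : 0 ≤ stdCdf h :=
  setIntegral_nonneg measurableSet_Iio fun x _ => stdPdf_nonneg x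

lemma stdCdf_le_one (h : ℝ) : stdCdf h ≤ 1 := by
  rw [← integral_stdPdf]
  exact setIntegral_le_integral integrable_stdPdf (.of_forall stdPdf_nonneg)

lemma stdCdf_sub (a b : ℝ) : stdCdf b - stdCdf a = ∫ x in a..b, stdPdf x := by
  rw [stdCdf_eq_Iic, stdCdf_eq_Iic,
    intervalIntegral.integral_Iic_sub_Iic integrable_stdPdf.integrableOn
      integrable_stdPdf.integrableOn]

lemma hasDerivAt_stdCdf (h : ℝ) : HasDerivAt stdCdf (stdPdf h) h := by
  have : stdCdf = fun b => stdCdf 0 + ∫ x in (0:ℝ)..b, stdPdf x := by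
    funext b; rw [← stdCdf_sub 0 b]; ring
  rw [this]
  exact (intervalIntegral.integral_hasDerivAt_right
    integrable_stdPdf.intervalIntegrable
    (continuous_stdPdf.stronglyMeasurableAtFilter _ _)
    continuous_stdPdf.continuousAt).const_add _

lemma continuous_stdCdf : Continuous stdCdf := by
  have : ∀ h, ContinuousAt stdCdf h := fun h => (hasDerivAt_stdCdf h).continuousAt
  exact continuous_iff_continuousAt.2 this

lemma strictMono_stdCdf : StrictMono stdCdf := by
  intro a b hab
  have : 0 < ∫ x in a..b, stdPdf x :=
    intervalIntegral.intervalIntegral_pos_of_pos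
      integrable_stdPdf.intervalIntegrable (fun x => stdPdf_pos x) hab
  linarith [stdCdf_sub a b]

lemma stdCdf_pos (h : ℝ) : 0 < stdCdf h :=
  lt_of_le_of_lt (stdCdf_nonneg (h - 1)) (strictMono_stdCdf (by linarith))

lemma stdCdf_lt_one (h : ℝ) : stdCdf h < 1 :=
  lt_of_lt_of_le (strictMono_stdCdf (show h < h + 1 by linarith)) (stdCdf_le_one (h + 1))

lemma tendsto_stdCdf_atTop : Tendsto stdCdf atTop (nhds 1) := by
  have h1 : Tendsto (fun b => stdCdf 0 + ∫ x in (0:ℝ)..b, stdPdf x) atTop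
      (nhds (stdCdf 0 + ∫ x in Set.Ioi 0, stdPdf x)) :=
    tendsto_const_nhds.add
      (intervalIntegral_tendsto_integral_Ioi 0 integrable_stdPdf.integrableOn tendsto_id)
  have h2 : stdCdf 0 + ∫ x in Set.Ioi 0, stdPdf x = 1 := by
    rw [stdCdf_eq_Iic, intervalIntegral.integral_Iic_add_Ioi integrable_stdPdf.integrableOn
      integrable_stdPdf.integrableOn, integral_stdPdf]
  rw [← h2]
  refine h1.congr fun b => ?_
  rw [← stdCdf_sub 0 b]; ring

lemma tendsto_stdCdf_atBot : Tendsto stdCdf atBot (nhds 0) := by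
  have h1 : Tendsto (fun a => stdCdf 0 - ∫ x in a..(0:ℝ), stdPdf x) atBot
      (nhds (stdCdf 0 - ∫ x in Set.Iic 0, stdPdf x)) :=
    tendsto_const_nhds.sub
      (intervalIntegral_tendsto_integral_Iic 0 integrable_stdPdf.integrableOn tendsto_id)
  have h2 : stdCdf 0 - ∫ x in Set.Iic 0, stdPdf x = 0 := by
    rw [stdCdf_eq_Iic]; ring
  rw [← h2]
  refine h1.congr fun a => ?_
  rw [← stdCdf_sub a 0]; ring

lemma range_stdCdf : Set.range stdCdf = Set.Ioo 0 1 := by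
  apply Set.eq_of_subset_of_subset
  · rintro y ⟨z, rfl⟩; exact ⟨stdCdf_pos z, stdCdf_lt_one z⟩
  · rintro y ⟨hy0, hy1⟩
    obtain ⟨a, ha⟩ := (tendsto_stdCdf_atBot.eventually_lt_const hy0).exists
    obtain ⟨b, hb⟩ := (tendsto_stdCdf_atTop.eventually_const_lt hy1).exists
    have hab : a ≤ b := by
      by_contra hcon
      exact absurd (strictMono_stdCdf (not_le.1 hcon)) (by linarith [ha, hb] : ¬ _)
    obtain ⟨z, _, hz⟩ := intermediate_value_Icc hab continuous_stdCdf.continuousOn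
      ⟨ha.le, hb.le⟩
    exact ⟨z, hz⟩

lemma stdQuantile_stdCdf (z : ℝ) : stdQuantile (stdCdf z) = z :=
  Function.leftInverse_invFun strictMono_stdCdf.injective z

lemma stdCdf_neg (z : ℝ) : stdCdf (-z) = 1 - stdCdf z := by
  have h1 : stdCdf (-z) = ∫ x in Set.Iic (-z), stdPdf x := stdCdf_eq_Iic _
  have heven : ∀ x : ℝ, stdPdf (-x) = stdPdf x := by
    intro x; unfold stdPdf; congr 2; ring
  have h2 : (∫ x in Set.Iic (-z), stdPdf x) = ∫ x in Set.Ioi z, stdPdf x := by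
    have := integral_comp_neg_Iic (-z) stdPdf
    simp_rw [heven, neg_neg] at this
    exact this
  have h3 : (∫ x in Set.Iic z, stdPdf x) + ∫ x in Set.Ioi z, stdPdf x = 1 := by
    rw [intervalIntegral.integral_Iic_add_Ioi integrable_stdPdf.integrableOn
      integrable_stdPdf.integrableOn, integral_stdPdf]
  rw [h1, h2, ← stdCdf_eq_Iic] at *
  linarith


lemma binPdf_eq {ρ : ℝ} (hρ : ρ ∈ Set.Ioo (-1:ℝ) 1) (x y : ℝ) :
    binPdf x y ρ = stdPdf x * ((Real.sqrt (1 - ρ^2))⁻¹ *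
      stdPdf ((y - ρ * x) / Real.sqrt (1 - ρ^2))) := by
  obtain ⟨h1, h2⟩ := hρ
  have hs2 : (0:ℝ) < 1 - ρ^2 := by nlinarith
  set s := Real.sqrt (1 - ρ^2) with hs
  have hs0 : 0 < s := Real.sqrt_pos.2 hs2
  have hss : s^2 = 1 - ρ^2 := Real.sq_sqrt hs2.le
  have h2pi : Real.sqrt (2*Real.pi) * Real.sqrt (2*Real.pi) = 2 * Real.pi :=
    Real.mul_self_sqrt (by positivity)
  have hsp : (0:ℝ) < Real.sqrt (2*Real.pi) := Real.sqrt_pos.2 (by positivity)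
  have hexp : -(x^2 - 2*ρ*x*y + y^2)/(2*(1-ρ^2)) =
      -x^2/2 + -((y - ρ*x)/s)^2/2 := by
    rw [div_pow, hss]
    field_simp
    ring
  have hconst : (1 / (2 * Real.pi * s)) =
      (1/Real.sqrt (2*Real.pi)) * (s⁻¹ * (1/Real.sqrt (2*Real.pi))) := by
    simp only [one_div]
    rw [← mul_inv, ← mul_inv]
    congr 1
    calc 2 * Real.pi * s = (Real.sqrt (2*Real.pi) * Real.sqrt (2*Real.pi)) * s := by rw [h2pi]
      _ = Real.sqrt (2*Real.pi) * (s * Real.sqrt (2*Real.pi)) := by ring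
  unfold binPdf stdPdf
  rw [← hs, hexp, Real.exp_add, hconst]
  ring

lemma integral_shift {s : ℝ} (hs : 0 < s) (μx k : ℝ) :
    (∫ y in Set.Iio k, s⁻¹ * stdPdf ((y - μx)/s)) = stdCdf ((k - μx)/s) := by
  have himg : (fun t : ℝ => μx + s * t) '' Set.Iio ((k - μx)/s) = Set.Iio k := by
    ext y
    simp only [Set.mem_image, Set.mem_Iio]
    constructor
    · rintro ⟨t, ht, rfl⟩
      have := (lt_div_iff₀ hs).1 ht
      linarith
    · intro hy
      refine ⟨(y - μx)/s, by apply div_lt_div_of_pos_right ?_ hs <;> linarith, by field_simp; ring⟩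
  have hderiv : ∀ t ∈ Set.Iio ((k - μx)/s), HasDerivWithinAt (fun t : ℝ => μx + s * t) s
      (Set.Iio ((k - μx)/s)) t := by
    intro t _
    simpa using (((hasDerivAt_id t).const_mul s).const_add μx).hasDerivWithinAt
  have hinj : Set.InjOn (fun t : ℝ => μx + s * t) (Set.Iio ((k - μx)/s)) := by
    intro a _ b _ hab
    simp only at hab
    have := mul_left_cancel₀ hs.ne' (by linarith : s * a = s * b)
    exact this
  rw [← himg, MeasureTheory.integral_image_eq_integral_abs_deriv_smul measurableSet_Iio
    hderiv hinj]
  unfold stdCdf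
  refine setIntegral_congr_fun measurableSet_Iio (fun t _ => ?_)
  rw [smul_eq_mul, abs_of_pos hs]
  have : (μx + s * t - μx)/s = t := by field_simp; ring
  rw [this]
  field_simp

lemma binCdf_eq {ρ : ℝ} (hρ : ρ ∈ Set.Ioo (-1:ℝ) 1) (h k : ℝ) :
    binCdf h k ρ =
      ∫ x in Set.Iio h, stdPdf x * stdCdf ((k - ρ*x)/Real.sqrt (1-ρ^2)) := by
  have hs2 : (0:ℝ) < 1 - ρ^2 := by nlinarith [hρ.1, hρ.2]
  have hs0 : 0 < Real.sqrt (1-ρ^2) := Real.sqrt_pos.2 hs2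
  unfold binCdf
  refine setIntegral_congr_fun measurableSet_Iio (fun x _ => ?_)
  simp_rw [binPdf_eq hρ]
  rw [MeasureTheory.integral_const_mul, ← integral_shift hs0 (ρ * x) k]

lemma integral_quantile (F : ℝ → ℝ) :
    (∫ u in (0:ℝ)..1, F (stdQuantile u)) = ∫ z, stdPdf z * F z := by
  rw [intervalIntegral.integral_of_le zero_le_one, integral_Ioc_eq_integral_Ioo,
    ← range_stdCdf, ← Set.image_univ,
    MeasureTheory.integral_image_eq_integral_abs_deriv_smul MeasurableSet.univ
      (fun z _ => (hasDerivAt_stdCdf z).hasDerivWithinAt)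
      (Function.Injective.injOn strictMono_stdCdf.injective)]
  rw [Measure.restrict_univ]
  refine integral_congr_ae (.of_forall fun z => ?_)
  simp only [smul_eq_mul, stdQuantile_stdCdf, abs_of_pos (stdPdf_pos z)]

lemma tendsto_stdPdf_atBot : Tendsto stdPdf atBot (nhds 0) := by
  have hb : Tendsto (fun x : ℝ => (1 / Real.sqrt (2 * Real.pi)) * Real.exp (1 + x))
      atBot (nhds 0) := by
    have h1 : Tendsto (fun x : ℝ => 1 + x) atBot atBot :=
      tendsto_atBot_add_const_left atBot 1 tendsto_id
    have h2 : Tendsto (fun x : ℝ => Real.exp (1 + x)) atBot (nhds 0) :=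
      Real.tendsto_exp_atBot.comp h1
    have h3 := h2.const_mul (1 / Real.sqrt (2 * Real.pi))
    rwa [mul_zero] at h3
  refine squeeze_zero (fun x => (stdPdf_pos x).le) (fun x => ?_) hb
  unfold stdPdf
  have h2 : (0:ℝ) ≤ 1 / Real.sqrt (2 * Real.pi) := by positivity
  refine mul_le_mul_of_nonneg_left ?_ h2
  exact Real.exp_le_exp.2 (by nlinarith [sq_nonneg (x + 1)])

lemma tendsto_stdPdf_atTop : Tendsto stdPdf atTop (nhds 0) := by
  have hb : Tendsto (fun x : ℝ => (1 / Real.sqrt (2 * Real.pi)) * Real.exp (1 - x))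
      atTop (nhds 0) := by
    have h1 : Tendsto (fun x : ℝ => 1 - x) atTop atBot := by
      have : Tendsto (fun x : ℝ => -x) atTop atBot := tendsto_neg_atTop_atBot
      have h0 := tendsto_atBot_add_const_left atTop 1 this
      exact h0.congr (fun x => by ring)
    have h2 : Tendsto (fun x : ℝ => Real.exp (1 - x)) atTop (nhds 0) :=
      Real.tendsto_exp_atBot.comp h1
    have h3 := h2.const_mul (1 / Real.sqrt (2 * Real.pi))
    rwa [mul_zero] at h3
  refine squeeze_zero (fun x => (stdPdf_pos x).le) (fun x => ?_) hb
  unfold stdPdf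
  have h2 : (0:ℝ) ≤ 1 / Real.sqrt (2 * Real.pi) := by positivity
  refine mul_le_mul_of_nonneg_left ?_ h2
  exact Real.exp_le_exp.2 (by nlinarith [sq_nonneg (x - 1)])

lemma integrable_abs_mul_stdPdf : Integrable (fun x => |x| * stdPdf x) := by
  have h : Integrable (fun x : ℝ => |x * Real.exp (-(1/2:ℝ) * x^2)|) :=
    (integrable_mul_exp_neg_mul_sq (by norm_num : (0:ℝ) < 1/2)).abs
  refine (h.const_mul (1 / Real.sqrt (2 * Real.pi))).congr (.of_forall fun x => ?_)
  simp only [stdPdf_eq, abs_mul, abs_of_nonneg (Real.exp_pos _).le]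
  ring

lemma integrable_linear_stdPdf (a b : ℝ) : Integrable (fun x => (a + b * |x|) * stdPdf x) := by
  have := (integrable_stdPdf.const_mul a).add ((integrable_abs_mul_stdPdf).const_mul b)
  refine this.congr (.of_forall fun x => ?_)
  simp only [Pi.add_apply]
  ring

lemma integrable_stdPdf_mul {g : ℝ → ℝ} (hg : Continuous g) (h0 : ∀ x, 0 ≤ g x)
    (h1 : ∀ x, g x ≤ 1) : Integrable (fun x => stdPdf x * g x) := by
  refine integrable_stdPdf.mono' ((continuous_stdPdf.mul hg).aestronglyMeasurable)
    (.of_forall fun x => ?_)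
  rw [Real.norm_eq_abs, abs_mul, abs_of_nonneg (stdPdf_nonneg x), abs_of_nonneg (h0 x)]
  calc stdPdf x * g x ≤ stdPdf x * 1 := mul_le_mul_of_nonneg_left (h1 x) (stdPdf_nonneg x)
    _ = stdPdf x := by ring

lemma monotone_binCdf_diag {ρ : ℝ} (hρ : ρ ∈ Set.Ioo (-1:ℝ) 1) :
    Monotone (fun z => binCdf z z ρ) := by
  have hs2 : (0:ℝ) < 1 - ρ^2 := by nlinarith [hρ.1, hρ.2]
  have hs0 : 0 < Real.sqrt (1-ρ^2) := Real.sqrt_pos.2 hs2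
  intro z₁ z₂ hz
  simp only
  rw [binCdf_eq hρ, binCdf_eq hρ]
  have hint : ∀ z k : ℝ, IntegrableOn (fun x => stdPdf x * stdCdf ((k - ρ*x)/Real.sqrt (1-ρ^2)))
      (Set.Iio z) := by
    intro z k
    exact (integrable_stdPdf_mul (continuous_stdCdf.comp (by fun_prop))
      (fun x => stdCdf_nonneg _) (fun x => stdCdf_le_one _)).integrableOn
  calc (∫ x in Set.Iio z₁, stdPdf x * stdCdf ((z₁ - ρ*x)/Real.sqrt (1-ρ^2)))
      ≤ ∫ x in Set.Iio z₁, stdPdf x * stdCdf ((z₂ - ρ*x)/Real.sqrt (1-ρ^2)) := by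
        refine setIntegral_mono_on (hint z₁ z₁) (hint z₁ z₂) measurableSet_Iio (fun x _ => ?_)
        refine mul_le_mul_of_nonneg_left ?_ (stdPdf_nonneg x)
        refine strictMono_stdCdf.monotone ?_
        exact (div_le_div_iff_of_pos_right hs0).2 (by linarith)
    _ ≤ ∫ x in Set.Iio z₂, stdPdf x * stdCdf ((z₂ - ρ*x)/Real.sqrt (1-ρ^2)) := by
        refine setIntegral_mono_set (hint z₂ z₂) ?_ ?_
        · exact .of_forall fun x => mul_nonneg (stdPdf_nonneg x) (stdCdf_nonneg _)
        · exact HasSubset.Subset.eventuallyLE (Set.Iio_subset_Iio hz)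

lemma binCdf_diag_nonneg {ρ : ℝ} (hρ : ρ ∈ Set.Ioo (-1:ℝ) 1) (z k : ℝ) :
    0 ≤ binCdf z k ρ := by
  rw [binCdf_eq hρ]
  exact setIntegral_nonneg measurableSet_Iio
    (fun x _ => mul_nonneg (stdPdf_nonneg x) (stdCdf_nonneg _))

lemma binCdf_diag_le_one {ρ : ℝ} (hρ : ρ ∈ Set.Ioo (-1:ℝ) 1) (z k : ℝ) :
    binCdf z k ρ ≤ 1 := by
  rw [binCdf_eq hρ]
  have h1 : (∫ x in Set.Iio z, stdPdf x * stdCdf ((k - ρ*x)/Real.sqrt (1-ρ^2)))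
      ≤ ∫ x, stdPdf x * stdCdf ((k - ρ*x)/Real.sqrt (1-ρ^2)) :=
    setIntegral_le_integral (integrable_stdPdf_mul (continuous_stdCdf.comp (by fun_prop))
      (fun x => stdCdf_nonneg _) (fun x => stdCdf_le_one _))
      (.of_forall fun x => mul_nonneg (stdPdf_nonneg x) (stdCdf_nonneg _))
  have h2 : (∫ x, stdPdf x * stdCdf ((k - ρ*x)/Real.sqrt (1-ρ^2))) ≤ ∫ x, stdPdf x := by
    refine integral_mono (integrable_stdPdf_mul (continuous_stdCdf.comp (by fun_prop))
      (fun x => stdCdf_nonneg _) (fun x => stdCdf_le_one _)) integrable_stdPdf (fun x => ?_)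
    calc stdPdf x * stdCdf _ ≤ stdPdf x * 1 :=
          mul_le_mul_of_nonneg_left (stdCdf_le_one _) (stdPdf_nonneg x)
      _ = stdPdf x := by ring
  rw [integral_stdPdf] at h2
  linarith

lemma integrable_stdPdf_mul_binCdf {ρ : ℝ} (hρ : ρ ∈ Set.Ioo (-1:ℝ) 1) :
    Integrable (fun z => stdPdf z * binCdf z z ρ) := by
  refine integrable_stdPdf.mono'
    ((continuous_stdPdf.aestronglyMeasurable.mul
      ((monotone_binCdf_diag hρ).measurable.aestronglyMeasurable)))
    (.of_forall fun z => ?_)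
  rw [Real.norm_eq_abs, abs_mul, abs_of_nonneg (stdPdf_nonneg z),
    abs_of_nonneg (binCdf_diag_nonneg hρ z z)]
  calc stdPdf z * binCdf z z ρ ≤ stdPdf z * 1 :=
        mul_le_mul_of_nonneg_left (binCdf_diag_le_one hρ z z) (stdPdf_nonneg z)
    _ = stdPdf z := by ring

lemma const_on_Ioo {f : ℝ → ℝ} (hf : ∀ x ∈ Set.Ioo (-1:ℝ) 1, HasDerivAt f 0 x)
    {a b : ℝ} (ha : a ∈ Set.Ioo (-1:ℝ) 1) (hb : b ∈ Set.Ioo (-1:ℝ) 1) : f a = f b := by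
  refine Convex.is_const_of_fderivWithin_eq_zero (convex_Ioo (-1:ℝ) 1)
    (fun x hx => ((hf x hx).differentiableAt).differentiableWithinAt) (fun x hx => ?_) ha hb
  rw [fderivWithin_of_isOpen isOpen_Ioo hx, (hf x hx).hasFDerivAt.fderiv]
  ext y
  simp

lemma binPdf_pos {ρ : ℝ} (hρ : ρ ∈ Set.Ioo (-1:ℝ) 1) (x y : ℝ) : 0 < binPdf x y ρ := by
  have hs2 : (0:ℝ) < 1 - ρ^2 := by nlinarith [hρ.1, hρ.2]
  have hs0 : 0 < Real.sqrt (1-ρ^2) := Real.sqrt_pos.2 hs2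
  unfold binPdf
  have : (0:ℝ) < 2 * Real.pi * Real.sqrt (1 - ρ^2) := by positivity
  positivity

lemma hasDerivAt_binPdf_fst {ρ : ℝ} (hρ : ρ ∈ Set.Ioo (-1:ℝ) 1) (z x : ℝ) :
    HasDerivAt (fun x => binPdf x z ρ)
      (binPdf x z ρ * ((ρ*z - x)/(1 - ρ^2))) x := by
  have hs2 : (0:ℝ) < 1 - ρ^2 := by nlinarith [hρ.1, hρ.2]
  have h2 : HasDerivAt (fun x : ℝ => x^2) (2*x) x := by
    simpa using hasDerivAt_pow 2 x
  have h3 : HasDerivAt (fun x : ℝ => 2*ρ*x*z) (2*ρ*z) x := by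
    have h := (hasDerivAt_id x).const_mul (2*ρ*z)
    convert h using 1
    rfl
    rfl
    · funext t; simp; ring
    · simp
  have h1 : HasDerivAt (fun x : ℝ => x^2 - 2*ρ*x*z + z^2) (2*x - 2*ρ*z) x :=
    (h2.sub h3).add_const (z^2)
  have h4 : HasDerivAt (fun x : ℝ => -(x^2 - 2*ρ*x*z + z^2)/(2*(1-ρ^2)))
      ((-(2*x - 2*ρ*z))/(2*(1-ρ^2))) x := h1.neg.div_const (2*(1-ρ^2))
  have h5 := (h4.exp).const_mul (1 / (2 * Real.pi * Real.sqrt (1 - ρ^2)))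
  have hfun : (fun x => binPdf x z ρ) = fun x =>
      (1 / (2 * Real.pi * Real.sqrt (1 - ρ^2))) *
        Real.exp (-(x^2 - 2*ρ*x*z + z^2)/(2*(1-ρ^2))) := rfl
  rw [hfun]
  convert h5 using 1
  rfl
  rfl
  unfold binPdf
  field_simp
  ring

lemma tendsto_binPdf_fst_atBot {ρ : ℝ} (hρ : ρ ∈ Set.Ioo (-1:ℝ) 1) (z : ℝ) :
    Tendsto (fun x => binPdf x z ρ) atBot (nhds 0) := by
  have hs2 : (0:ℝ) < 1 - ρ^2 := by nlinarith [hρ.1, hρ.2]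
  have hs0 : 0 < Real.sqrt (1-ρ^2) := Real.sqrt_pos.2 hs2
  set c := (Real.sqrt (1-ρ^2))⁻¹ * (1 / Real.sqrt (2 * Real.pi)) with hc
  have hb : Tendsto (fun x => stdPdf x * c) atBot (nhds 0) := by
    have := tendsto_stdPdf_atBot.mul_const c
    rwa [zero_mul] at this
  refine squeeze_zero (fun x => (binPdf_pos hρ x z).le) (fun x => ?_) hb
  rw [binPdf_eq hρ x z]
  refine mul_le_mul_of_nonneg_left ?_ (stdPdf_nonneg x)
  rw [hc]
  exact mul_le_mul_of_nonneg_left (stdPdf_le _) (by positivity)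

lemma binPdf_le {ρ : ℝ} (hρ : ρ ∈ Set.Ioo (-1:ℝ) 1) (x y : ℝ) :
    binPdf x y ρ ≤ stdPdf x * ((Real.sqrt (1-ρ^2))⁻¹ * (1 / Real.sqrt (2 * Real.pi))) := by
  have hs2 : (0:ℝ) < 1 - ρ^2 := by nlinarith [hρ.1, hρ.2]
  have hs0 : 0 < Real.sqrt (1-ρ^2) := Real.sqrt_pos.2 hs2
  rw [binPdf_eq hρ x y]
  refine mul_le_mul_of_nonneg_left ?_ (stdPdf_nonneg x)
  exact mul_le_mul_of_nonneg_left (stdPdf_le _) (by positivity)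

lemma integrable_F' {ρ : ℝ} (hρ : ρ ∈ Set.Ioo (-1:ℝ) 1) (z : ℝ) :
    Integrable (fun x => binPdf x z ρ * ((ρ*z - x)/(1 - ρ^2))) := by
  have hs2 : (0:ℝ) < 1 - ρ^2 := by nlinarith [hρ.1, hρ.2]
  have hs0 : 0 < Real.sqrt (1-ρ^2) := Real.sqrt_pos.2 hs2
  set c := (Real.sqrt (1-ρ^2))⁻¹ * (1 / Real.sqrt (2 * Real.pi)) with hc
  have hc0 : 0 ≤ c := by positivity
  have hbint : Integrable (fun x => (c/(1-ρ^2) * |z| + c/(1-ρ^2) * |x|) * stdPdf x) :=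
    integrable_linear_stdPdf _ _
  refine hbint.mono' ?_ (.of_forall fun x => ?_)
  · have hcont : Continuous (fun x => binPdf x z ρ * ((ρ*z - x)/(1 - ρ^2))) := by
      unfold binPdf; fun_prop
    exact hcont.aestronglyMeasurable
  · rw [Real.norm_eq_abs, abs_mul, abs_of_nonneg (binPdf_pos hρ x z).le, abs_div,
      abs_of_pos hs2]
    have h1 : binPdf x z ρ ≤ stdPdf x * c := binPdf_le hρ x z
    have h2 : |ρ*z - x| ≤ |z| + |x| := by
      have : |ρ*z - x| ≤ |ρ*z| + |x| := abs_sub _ _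
      have h3 : |ρ*z| ≤ |z| := by
        rw [abs_mul]
        have : |ρ| ≤ 1 := by rw [abs_le]; constructor <;> [linarith [hρ.1]; linarith [hρ.2]]
        nlinarith [abs_nonneg z]
      linarith
    have h4 : 0 ≤ binPdf x z ρ := (binPdf_pos hρ x z).le
    have h5 : 0 ≤ |ρ*z - x| := abs_nonneg _
    have h6 : 0 ≤ stdPdf x := stdPdf_nonneg x
    calc binPdf x z ρ * (|ρ*z - x| / (1-ρ^2))
        ≤ (stdPdf x * c) * ((|z| + |x|) / (1-ρ^2)) := by
          exact mul_le_mul h1 ((div_le_div_iff_of_pos_right hs2).2 h2) (by positivity) (by positivity)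
      _ = (c/(1-ρ^2) * |z| + c/(1-ρ^2) * |x|) * stdPdf x := by ring

lemma integral_F' {ρ : ℝ} (hρ : ρ ∈ Set.Ioo (-1:ℝ) 1) (z : ℝ) :
    (∫ x in Set.Iio z, binPdf x z ρ * ((ρ*z - x)/(1 - ρ^2))) =
      (2 * Real.pi * Real.sqrt (1 - ρ^2))⁻¹ * Real.exp (-z^2/(1+ρ)) := by
  have hs2 : (0:ℝ) < 1 - ρ^2 := by nlinarith [hρ.1, hρ.2]
  have h1p : (0:ℝ) < 1 + ρ := by linarith [hρ.1]
  rw [setIntegral_congr_set Iio_ae_eq_Iic]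
  rw [integral_Iic_of_hasDerivAt_of_tendsto
    (Continuous.continuousWithinAt (by unfold binPdf; fun_prop))
    (fun x _ => hasDerivAt_binPdf_fst hρ z x)
    (integrable_F' hρ z).integrableOn
    (tendsto_binPdf_fst_atBot hρ z)]
  rw [sub_zero]
  unfold binPdf
  rw [one_div]
  congr 1
  rw [Real.exp_eq_exp, div_eq_div_iff (by positivity) (by positivity)]
  ring

lemma hasDerivAt_inner_rho (z x : ℝ) {ρ : ℝ} (hρ : ρ ∈ Set.Ioo (-1:ℝ) 1) :
    HasDerivAt (fun r => stdPdf x * stdCdf ((z - r*x)/Real.sqrt (1-r^2)))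
      (binPdf x z ρ * ((ρ*z - x)/(1 - ρ^2))) ρ := by
  have hs2 : (0:ℝ) < 1 - ρ^2 := by nlinarith [hρ.1, hρ.2]
  have hs0 : 0 < Real.sqrt (1-ρ^2) := Real.sqrt_pos.2 hs2
  have hss : Real.sqrt (1-ρ^2) ^ 2 = 1 - ρ^2 := Real.sq_sqrt hs2.le
  -- derivative of numerator r ↦ z - r*x
  have hnum : HasDerivAt (fun r : ℝ => z - r*x) (-x) ρ := by
    have h := ((hasDerivAt_id ρ).const_mul x).neg.const_add z
    convert h using 1
    rfl
    rfl
    · funext t; simp; ring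
    · simp
  -- derivative of r ↦ √(1 - r²)
  have hinner : HasDerivAt (fun r : ℝ => 1 - r^2) (-(2*ρ)) ρ := by
    have h := (hasDerivAt_pow 2 ρ).const_sub 1
    simpa using h
  have hsqrt : HasDerivAt (fun r : ℝ => Real.sqrt (1 - r^2))
      (1 / (2 * Real.sqrt (1-ρ^2)) * (-(2*ρ))) ρ :=
    (Real.hasDerivAt_sqrt hs2.ne').comp ρ hinner
  -- quotient
  have hdiv : HasDerivAt (fun r : ℝ => (z - r*x)/Real.sqrt (1-r^2))
      (((-x) * Real.sqrt (1-ρ^2) - (z - ρ*x) * (1 / (2 * Real.sqrt (1-ρ^2)) * (-(2*ρ))))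
        / Real.sqrt (1-ρ^2) ^ 2) ρ := hnum.div hsqrt hs0.ne'
  have hcdf := (hasDerivAt_stdCdf ((z - ρ*x)/Real.sqrt (1-ρ^2))).comp ρ hdiv
  have hfin := hcdf.const_mul (stdPdf x)
  convert hfin using 1
  rfl
  rfl
  rfl
  rw [binPdf_eq hρ x z]
  set s := Real.sqrt (1-ρ^2) with hs
  have h12 : 1 - ρ^2 = s^2 := hss.symm
  rw [h12]
  have hsne : s ≠ 0 := ne_of_gt hs0
  generalize stdPdf ((z - ρ * x) / s) = u
  field_simp
  linear_combination (stdPdf x * x * u) * hss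

lemma hasDerivAt_binCdf_diag (z : ℝ) {ρ₀ : ℝ} (hρ₀ : ρ₀ ∈ Set.Ioo (-1:ℝ) 1) :
    HasDerivAt (fun ρ => binCdf z z ρ)
      ((2 * Real.pi * Real.sqrt (1 - ρ₀^2))⁻¹ * Real.exp (-z^2/(1+ρ₀))) ρ₀ := by
  have habs : |ρ₀| < 1 := abs_lt.2 ⟨hρ₀.1, hρ₀.2⟩
  set ε := (1 - |ρ₀|)/2 with hε
  have hε0 : 0 < ε := by rw [hε]; linarith
  set r₁ := (1 + |ρ₀|)/2 with hr₁
  have hr₁1 : r₁ < 1 := by rw [hr₁]; linarith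
  have hr₁0 : 0 ≤ r₁ := by rw [hr₁]; positivity
  set m := 1 - r₁^2 with hm
  have hm0 : 0 < m := by rw [hm]; nlinarith
  have hball : ∀ ρ ∈ Metric.ball ρ₀ ε, |ρ| ≤ r₁ ∧ ρ ∈ Set.Ioo (-1:ℝ) 1 ∧ m ≤ 1 - ρ^2 := by
    intro ρ hρ
    rw [Metric.mem_ball, Real.dist_eq] at hρ
    have h1 : |ρ| ≤ r₁ := by
      have := abs_sub_abs_le_abs_sub ρ ρ₀
      rw [hr₁]; rw [hε] at hρ; linarith
    have h2 : ρ ∈ Set.Ioo (-1:ℝ) 1 := by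
      have := abs_lt.1 (lt_of_le_of_lt h1 hr₁1)
      exact ⟨this.1, this.2⟩
    have h3 : m ≤ 1 - ρ^2 := by
      rw [hm]
      have : ρ^2 ≤ r₁^2 := by nlinarith [abs_nonneg ρ, sq_abs ρ]
      linarith
    exact ⟨h1, h2, h3⟩
  set c₀ := (Real.sqrt m)⁻¹ * (1/Real.sqrt (2*Real.pi)) with hc₀
  have hc₀0 : 0 ≤ c₀ := by rw [hc₀]; positivity
  have key := hasDerivAt_integral_of_dominated_loc_of_deriv_le (μ := volume.restrict (Set.Iio z))
    (F := fun r x => stdPdf x * stdCdf ((z - r*x)/Real.sqrt (1-r^2)))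
    (F' := fun r x => binPdf x z r * ((r*z - x)/(1 - r^2)))
    (x₀ := ρ₀)
    (bound := fun x => (c₀/m * |z| + c₀/m * |x|) * stdPdf x)
    (Metric.ball_mem_nhds ρ₀ hε0) ?_ ?_ ?_ ?_ ?_ ?_
  · obtain ⟨hint, hderiv⟩ := key
    have heq : (fun ρ => binCdf z z ρ) =ᶠ[nhds ρ₀]
        (fun ρ => ∫ x in Set.Iio z, stdPdf x * stdCdf ((z - ρ*x)/Real.sqrt (1-ρ^2))) :=
      eventually_of_mem (Ioo_mem_nhds hρ₀.1 hρ₀.2) (fun ρ hρ => binCdf_eq hρ z z)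
    have h2 := hderiv.congr_of_eventuallyEq heq
    rwa [integral_F' hρ₀ z] at h2
  · refine Eventually.of_forall (fun ρ => ?_)
    exact (continuous_stdPdf.mul (continuous_stdCdf.comp (by fun_prop))).aestronglyMeasurable
  · exact (integrable_stdPdf_mul (continuous_stdCdf.comp (by fun_prop))
      (fun x => stdCdf_nonneg _) (fun x => stdCdf_le_one _)).integrableOn
  · exact (Continuous.aestronglyMeasurable (by unfold binPdf; fun_prop))
  · refine Eventually.of_forall (fun x => ?_)
    intro ρ hρmem
    obtain ⟨h1, h2, h3⟩ := hball ρ hρmem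
    have hs2 : (0:ℝ) < 1 - ρ^2 := lt_of_lt_of_le hm0 h3
    have hs0 : 0 < Real.sqrt (1-ρ^2) := Real.sqrt_pos.2 hs2
    rw [Real.norm_eq_abs, abs_mul, abs_of_nonneg (binPdf_pos h2 x z).le, abs_div,
      abs_of_pos hs2]
    have hb1 : binPdf x z ρ ≤ stdPdf x * c₀ := by
      refine (binPdf_le h2 x z).trans ?_
      refine mul_le_mul_of_nonneg_left ?_ (stdPdf_nonneg x)
      rw [hc₀]
      refine mul_le_mul_of_nonneg_right ?_ (by positivity)
      exact inv_anti₀ (Real.sqrt_pos.2 hm0) (Real.sqrt_le_sqrt h3)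
    have hb2 : |ρ*z - x| ≤ |z| + |x| := by
      have ha : |ρ*z - x| ≤ |ρ*z| + |x| := abs_sub _ _
      have hb : |ρ*z| ≤ |z| := by
        rw [abs_mul]; nlinarith [abs_nonneg z, abs_nonneg ρ, le_trans h1 hr₁1.le]
      linarith
    calc binPdf x z ρ * (|ρ*z - x| / (1-ρ^2))
        ≤ (stdPdf x * c₀) * ((|z| + |x|) / m) :=
          mul_le_mul hb1 (div_le_div₀ (by positivity) hb2 hm0 h3)
            (div_nonneg (abs_nonneg _) hs2.le) (mul_nonneg (stdPdf_nonneg x) hc₀0)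
      _ = (c₀/m * |z| + c₀/m * |x|) * stdPdf x := by ring
  · exact (integrable_linear_stdPdf _ _).integrableOn
  · refine Eventually.of_forall (fun x => ?_)
    intro ρ hρmem
    exact hasDerivAt_inner_rho z x (hball ρ hρmem).2.1

lemma integral_Aprime {ρ : ℝ} (hρ : ρ ∈ Set.Ioo (-1:ℝ) 1) :
    (∫ z, stdPdf z * ((2 * Real.pi * Real.sqrt (1 - ρ^2))⁻¹ * Real.exp (-z^2/(1+ρ)))) =
      (2 * Real.pi * Real.sqrt ((1-ρ)*(3+ρ)))⁻¹ := by
  have h1p : (0:ℝ) < 1 + ρ := by linarith [hρ.1]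
  have h1m : (0:ℝ) < 1 - ρ := by linarith [hρ.2]
  have hs2 : (0:ℝ) < 1 - ρ^2 := by nlinarith
  have h3 : (0:ℝ) < (1-ρ)*(3+ρ) := by nlinarith
  set b := (3+ρ)/(2*(1+ρ)) with hb
  have hb0 : 0 < b := by rw [hb]; exact div_pos (by linarith) (by linarith)
  have hrw : (fun z => stdPdf z * ((2 * Real.pi * Real.sqrt (1 - ρ^2))⁻¹ *
      Real.exp (-z^2/(1+ρ)))) = fun z =>
      ((2 * Real.pi * Real.sqrt (1 - ρ^2))⁻¹ * (1/Real.sqrt (2*Real.pi))) *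
        Real.exp (-b * z^2) := by
    funext z
    have hexp : Real.exp (-z^2/2) * Real.exp (-z^2/(1+ρ)) = Real.exp (-b * z^2) := by
      rw [← Real.exp_add, Real.exp_eq_exp, hb]
      have hne : (1:ℝ)+ρ ≠ 0 := h1p.ne'
      have hne3 : (3:ℝ)+ρ ≠ 0 := by linarith
      field_simp
      ring
    calc stdPdf z * ((2 * Real.pi * Real.sqrt (1 - ρ^2))⁻¹ * Real.exp (-z^2/(1+ρ)))
        = ((2 * Real.pi * Real.sqrt (1 - ρ^2))⁻¹ * (1/Real.sqrt (2*Real.pi))) *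
            (Real.exp (-z^2/2) * Real.exp (-z^2/(1+ρ))) := by unfold stdPdf; ring
      _ = _ := by rw [hexp]
  rw [hrw, MeasureTheory.integral_const_mul, integral_gaussian]
  have e1 : Real.pi/b = (2*Real.pi*(1-ρ^2)) / ((1-ρ)*(3+ρ)) := by
    rw [hb]
    have hne : (1:ℝ)+ρ ≠ 0 := h1p.ne'
    have hne3 : (3:ℝ)+ρ ≠ 0 := by linarith
    have hne1m : (1:ℝ)-ρ ≠ 0 := h1m.ne'
    field_simp
    ring
  have hsq : Real.sqrt (Real.pi/b) =
      Real.sqrt (2*Real.pi) * Real.sqrt (1-ρ^2) / Real.sqrt ((1-ρ)*(3+ρ)) := by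
    rw [e1, Real.sqrt_div (by positivity), Real.sqrt_mul (by positivity)]
  have hL0 : (0:ℝ) ≤ (2 * Real.pi * Real.sqrt (1 - ρ^2))⁻¹ * (1/Real.sqrt (2*Real.pi)) *
      Real.sqrt (Real.pi/b) := by positivity
  have hR0 : (0:ℝ) ≤ (2 * Real.pi * Real.sqrt ((1-ρ)*(3+ρ)))⁻¹ := by positivity
  have hsq2 : ((2 * Real.pi * Real.sqrt (1 - ρ^2))⁻¹ * (1/Real.sqrt (2*Real.pi)) *
      Real.sqrt (Real.pi/b))^2 = ((2 * Real.pi * Real.sqrt ((1-ρ)*(3+ρ)))⁻¹)^2 := by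
    have e2 : Real.sqrt (1-ρ^2) ^ 2 = 1-ρ^2 := Real.sq_sqrt hs2.le
    have e3 : Real.sqrt ((1-ρ)*(3+ρ)) ^ 2 = (1-ρ)*(3+ρ) := Real.sq_sqrt h3.le
    have e4 : Real.sqrt (Real.pi/b) ^ 2 = Real.pi/b := Real.sq_sqrt (by positivity)
    have e5 : Real.sqrt (2*Real.pi) ^ 2 = 2*Real.pi := Real.sq_sqrt (by positivity)
    have hpi : (0:ℝ) < Real.pi := Real.pi_pos
    simp only [mul_pow, inv_pow, div_pow, one_pow]
    rw [e2, e3, e4, e5, hb]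
    have hne : (1:ℝ)+ρ ≠ 0 := h1p.ne'
    have hne3 : (3:ℝ)+ρ ≠ 0 := by linarith
    field_simp
    ring
  calc (2 * Real.pi * Real.sqrt (1 - ρ^2))⁻¹ * (1/Real.sqrt (2*Real.pi)) *
      Real.sqrt (Real.pi/b)
      = Real.sqrt (((2 * Real.pi * Real.sqrt (1 - ρ^2))⁻¹ * (1/Real.sqrt (2*Real.pi)) *
          Real.sqrt (Real.pi/b))^2) := (Real.sqrt_sq hL0).symm
    _ = Real.sqrt (((2 * Real.pi * Real.sqrt ((1-ρ)*(3+ρ)))⁻¹)^2) := by rw [hsq2]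
    _ = (2 * Real.pi * Real.sqrt ((1-ρ)*(3+ρ)))⁻¹ := Real.sqrt_sq hR0

noncomputable def funA (ρ : ℝ) : ℝ := ∫ z, stdPdf z * binCdf z z ρ

lemma hasDerivAt_funA {ρ₀ : ℝ} (hρ₀ : ρ₀ ∈ Set.Ioo (-1:ℝ) 1) :
    HasDerivAt funA ((2 * Real.pi * Real.sqrt ((1-ρ₀)*(3+ρ₀)))⁻¹) ρ₀ := by
  have habs : |ρ₀| < 1 := abs_lt.2 ⟨hρ₀.1, hρ₀.2⟩
  set ε := (1 - |ρ₀|)/2 with hε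
  have hε0 : 0 < ε := by rw [hε]; linarith
  set r₁ := (1 + |ρ₀|)/2 with hr₁
  have hr₁1 : r₁ < 1 := by rw [hr₁]; linarith
  have hr₁0 : 0 ≤ r₁ := by rw [hr₁]; positivity
  set m := 1 - r₁^2 with hm
  have hm0 : 0 < m := by rw [hm]; nlinarith
  have hball : ∀ ρ ∈ Metric.ball ρ₀ ε, ρ ∈ Set.Ioo (-1:ℝ) 1 ∧ m ≤ 1 - ρ^2 := by
    intro ρ hρ
    rw [Metric.mem_ball, Real.dist_eq] at hρ
    have h1 : |ρ| ≤ r₁ := by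
      have := abs_sub_abs_le_abs_sub ρ ρ₀
      rw [hr₁]; rw [hε] at hρ; linarith
    have h2 : ρ ∈ Set.Ioo (-1:ℝ) 1 := by
      have := abs_lt.1 (lt_of_le_of_lt h1 hr₁1)
      exact ⟨this.1, this.2⟩
    have h3 : m ≤ 1 - ρ^2 := by
      rw [hm]
      have : ρ^2 ≤ r₁^2 := by nlinarith [abs_nonneg ρ, sq_abs ρ]
      linarith
    exact ⟨h2, h3⟩
  have key := hasDerivAt_integral_of_dominated_loc_of_deriv_le (μ := (volume : Measure ℝ))
    (F := fun r z => stdPdf z * binCdf z z r)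
    (F' := fun r z => stdPdf z * ((2 * Real.pi * Real.sqrt (1 - r^2))⁻¹ *
      Real.exp (-z^2/(1+r))))
    (x₀ := ρ₀)
    (bound := fun z => (2 * Real.pi * Real.sqrt m)⁻¹ * stdPdf z)
    (Metric.ball_mem_nhds ρ₀ hε0) ?_ ?_ ?_ ?_ ?_ ?_
  · obtain ⟨hint, hderiv⟩ := key
    have : funA = fun r => ∫ z, stdPdf z * binCdf z z r := rfl
    rw [this]
    rwa [integral_Aprime hρ₀] at hderiv
  · refine eventually_of_mem (Ioo_mem_nhds hρ₀.1 hρ₀.2) (fun r hr => ?_)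
    exact continuous_stdPdf.aestronglyMeasurable.mul
      ((monotone_binCdf_diag hr).measurable.aestronglyMeasurable)
  · exact integrable_stdPdf_mul_binCdf hρ₀
  · exact Continuous.aestronglyMeasurable (by unfold stdPdf; fun_prop)
  · refine Eventually.of_forall (fun z => ?_)
    intro r hrmem
    obtain ⟨h2, h3⟩ := hball r hrmem
    have h1p : (0:ℝ) < 1 + r := by linarith [h2.1]
    have hs2 : (0:ℝ) < 1 - r^2 := lt_of_lt_of_le hm0 h3
    have hsm : (0:ℝ) < Real.sqrt m := Real.sqrt_pos.2 hm0
    have hexp1 : Real.exp (-z^2/(1+r)) ≤ 1 := by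
      rw [Real.exp_le_one_iff, neg_div]
      have : (0:ℝ) ≤ z^2/(1+r) := by positivity
      linarith
    rw [Real.norm_eq_abs, abs_mul, abs_of_nonneg (stdPdf_nonneg z), abs_of_nonneg
      (by positivity : (0:ℝ) ≤ (2 * Real.pi * Real.sqrt (1 - r^2))⁻¹ * Real.exp (-z^2/(1+r)))]
    show stdPdf z * ((2 * Real.pi * Real.sqrt (1 - r^2))⁻¹ * Real.exp (-z^2/(1+r)))
      ≤ (2 * Real.pi * Real.sqrt m)⁻¹ * stdPdf z
    rw [mul_comm ((2 * Real.pi * Real.sqrt m)⁻¹) (stdPdf z)]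
    refine mul_le_mul_of_nonneg_left ?_ (stdPdf_nonneg z)
    calc (2 * Real.pi * Real.sqrt (1 - r^2))⁻¹ * Real.exp (-z^2/(1+r))
        ≤ (2 * Real.pi * Real.sqrt (1 - r^2))⁻¹ * 1 :=
          mul_le_mul_of_nonneg_left hexp1 (by positivity)
      _ = (2 * Real.pi * Real.sqrt (1 - r^2))⁻¹ := by ring
      _ ≤ (2 * Real.pi * Real.sqrt m)⁻¹ := by
          refine inv_anti₀ (by positivity) ?_
          have := Real.sqrt_le_sqrt h3
          nlinarith [Real.pi_pos]
  · exact integrable_stdPdf.const_mul _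
  · refine Eventually.of_forall (fun z => ?_)
    intro r hrmem
    exact (hasDerivAt_binCdf_diag z (hball r hrmem).1).const_mul (stdPdf z)

lemma integrable_stdPdf_stdCdf_pow (n : ℕ) : Integrable (fun z => stdPdf z * (stdCdf z)^n) := by
  refine integrable_stdPdf_mul (continuous_stdCdf.pow n) (fun x => pow_nonneg (stdCdf_nonneg x) n)
    (fun x => pow_le_one₀ (stdCdf_nonneg x) (stdCdf_le_one x))

lemma integral_phi_Phi_pow (n : ℕ) :
    (∫ z, stdPdf z * (stdCdf z)^n) = 1/(n+1) := by
  have hderiv : ∀ z : ℝ, HasDerivAt (fun z => (stdCdf z)^(n+1)/(n+1))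
      (stdPdf z * (stdCdf z)^n) z := by
    intro z
    have h := ((hasDerivAt_stdCdf z).pow (n+1)).div_const ((n:ℝ)+1)
    convert h using 1
    rfl
    rfl
    rfl
    have : ((n:ℝ)+1) ≠ 0 := by positivity
    push_cast
    field_simp
  have hcont : Continuous (fun z : ℝ => (stdCdf z)^(n+1)/((n:ℝ)+1)) :=
    (continuous_stdCdf.pow (n+1)).div_const _
  have hbot : Tendsto (fun z => (stdCdf z)^(n+1)/(n+1)) atBot (nhds 0) := by
    have hc : ContinuousAt (fun t : ℝ => t^(n+1)/((n:ℝ)+1)) 0 :=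
      ((continuous_pow (n+1)).div_const _).continuousAt
    have := hc.tendsto.comp tendsto_stdCdf_atBot
    simpa [Function.comp_def] using this
  have htop : Tendsto (fun z => (stdCdf z)^(n+1)/(n+1)) atTop (nhds (1/(n+1))) := by
    have hc : ContinuousAt (fun t : ℝ => t^(n+1)/((n:ℝ)+1)) 1 :=
      ((continuous_pow (n+1)).div_const _).continuousAt
    have := hc.tendsto.comp tendsto_stdCdf_atTop
    simpa [Function.comp_def] using this
  have hIic : (∫ z in Set.Iic 0, stdPdf z * (stdCdf z)^n) = (stdCdf 0)^(n+1)/(n+1) - 0 :=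
    integral_Iic_of_hasDerivAt_of_tendsto
      hcont.continuousWithinAt
      (fun x _ => hderiv x) (integrable_stdPdf_stdCdf_pow n).integrableOn hbot
  have hIoi : (∫ z in Set.Ioi 0, stdPdf z * (stdCdf z)^n) = 1/(n+1) - (stdCdf 0)^(n+1)/(n+1) :=
    integral_Ioi_of_hasDerivAt_of_tendsto
      hcont.continuousWithinAt
      (fun x _ => hderiv x) (integrable_stdPdf_stdCdf_pow n).integrableOn htop
  rw [← intervalIntegral.integral_Iic_add_Ioi (b := (0:ℝ))
    (integrable_stdPdf_stdCdf_pow n).integrableOn (integrable_stdPdf_stdCdf_pow n).integrableOn,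
    hIic, hIoi]
  ring

lemma binCdf_diag_zero (z : ℝ) : binCdf z z 0 = (stdCdf z)^2 := by
  have h0 : (0:ℝ) ∈ Set.Ioo (-1:ℝ) 1 := by constructor <;> norm_num
  rw [binCdf_eq h0 z z]
  have : ∀ x : ℝ, (z - 0*x)/Real.sqrt (1-(0:ℝ)^2) = z := by
    intro x; norm_num
  simp_rw [this]
  rw [MeasureTheory.integral_mul_const]
  rw [sq]
  rfl

lemma funA_zero : funA 0 = 1/3 := by
  unfold funA
  simp_rw [binCdf_diag_zero]
  have := integral_phi_Phi_pow 2
  norm_num at this ⊢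
  exact this

lemma continuous_stdCdf' : Continuous stdCdf := continuous_stdCdf

lemma arcsin_one_half : Real.arcsin (1/2) = Real.pi/6 := by
  rw [← Real.sin_pi_div_six,
    Real.arcsin_sin (by linarith [Real.pi_pos]) (by linarith [Real.pi_pos])]

lemma hasDerivAt_Rfun {r : ℝ} (hr : r ∈ Set.Ioo (-1:ℝ) 1) :
    HasDerivAt (fun r => 1/4 + Real.arcsin ((1+r)/2) / (2*Real.pi))
      ((2 * Real.pi * Real.sqrt ((1-r)*(3+r)))⁻¹) r := by
  have h1m : (0:ℝ) < 1 - r := by linarith [hr.2]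
  have h1p : (0:ℝ) < 1 + r := by linarith [hr.1]
  have h3 : (0:ℝ) < (1-r)*(3+r) := by nlinarith
  have hu1 : (1+r)/2 ≠ -1 := by
    intro h; have : (1+r) = -2 := by linarith [div_eq_iff (by norm_num : (2:ℝ) ≠ 0) |>.1 h]
    linarith
  have hu2 : (1+r)/2 ≠ 1 := by
    intro h; have : (1+r) = 2 := by linarith [div_eq_iff (by norm_num : (2:ℝ) ≠ 0) |>.1 h]
    linarith [hr.2]
  have hinner : HasDerivAt (fun r : ℝ => (1+r)/2) (1/2) r := by
    have := ((hasDerivAt_id r).const_add 1).div_const 2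
    simpa using this
  have harcsin := (Real.hasDerivAt_arcsin hu1 hu2).comp r hinner
  have hfull := (harcsin.div_const (2*Real.pi)).const_add (1/4 : ℝ)
  convert hfull using 1
  rfl
  rfl
  rfl
  have e0 : 1 - ((1+r)/2)^2 = ((1-r)*(3+r))/4 := by ring
  have hsqrt4 : Real.sqrt 4 = 2 := by
    rw [show (4:ℝ) = 2^2 by norm_num, Real.sqrt_sq (by norm_num : (0:ℝ) ≤ 2)]
  rw [e0, Real.sqrt_div h3.le, hsqrt4]
  have hne : Real.sqrt ((1-r)*(3+r)) ≠ 0 := by positivity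
  have hpine : Real.pi ≠ 0 := Real.pi_ne_zero
  field_simp

lemma funA_eq {ρ : ℝ} (hρ : ρ ∈ Set.Ioo (-1:ℝ) 1) :
    funA ρ = 1/4 + Real.arcsin ((1+ρ)/2)/(2*Real.pi) := by
  have h0 : (0:ℝ) ∈ Set.Ioo (-1:ℝ) 1 := by constructor <;> norm_num
  have key := const_on_Ioo (f := fun r => funA r -
      (1/4 + Real.arcsin ((1+r)/2)/(2*Real.pi))) ?_ hρ h0
  · have hz : funA 0 - (1/4 + Real.arcsin ((1+(0:ℝ))/2)/(2*Real.pi)) = 0 := by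
      rw [funA_zero]
      norm_num [arcsin_one_half]
      field_simp
      ring
    rw [hz] at key
    linarith [key]
  · intro x hx
    have := (hasDerivAt_funA hx).sub (hasDerivAt_Rfun hx)
    rw [sub_self] at this; exact this

lemma stdCdf_stdQuantile {u : ℝ} (hu : u ∈ Set.Ioo (0:ℝ) 1) :
    stdCdf (stdQuantile u) = u := by
  have : u ∈ Set.range stdCdf := by rw [range_stdCdf]; exact hu
  obtain ⟨z, rfl⟩ := this
  rw [stdQuantile_stdCdf]

lemma binCdf_anti {ρ : ℝ} (hρ : ρ ∈ Set.Ioo (-1:ℝ) 1) (z : ℝ) :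
    binCdf z (-z) ρ = stdCdf z - binCdf z z (-ρ) := by
  have hρn : -ρ ∈ Set.Ioo (-1:ℝ) 1 := ⟨by linarith [hρ.2], by linarith [hρ.1]⟩
  have hs2 : (0:ℝ) < 1 - ρ^2 := by nlinarith [hρ.1, hρ.2]
  have hs0 : 0 < Real.sqrt (1-ρ^2) := Real.sqrt_pos.2 hs2
  rw [binCdf_eq hρ z (-z), binCdf_eq hρn z z]
  have hpt : ∀ x : ℝ, stdPdf x * stdCdf ((-z - ρ*x)/Real.sqrt (1-ρ^2)) =
      stdPdf x - stdPdf x * stdCdf ((z - (-ρ)*x)/Real.sqrt (1-(-ρ)^2)) := by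
    intro x
    have h2 : (z - (-ρ)*x)/Real.sqrt (1-(-ρ)^2) = (z + ρ*x)/Real.sqrt (1-ρ^2) := by
      rw [show 1-(-ρ)^2 = 1-ρ^2 by ring]
      ring_nf
    have h1 : (-z - ρ*x)/Real.sqrt (1-ρ^2) = -((z + ρ*x)/Real.sqrt (1-ρ^2)) := by
      ring
    rw [h2, h1, stdCdf_neg]
    ring
  rw [setIntegral_congr_fun measurableSet_Iio (fun x _ => hpt x)]
  have hint1 : IntegrableOn stdPdf (Set.Iio z) := integrable_stdPdf.integrableOn
  have hint2 : IntegrableOn (fun x => stdPdf x * stdCdf ((z - (-ρ)*x)/Real.sqrt (1-(-ρ)^2)))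
      (Set.Iio z) := by
    refine (integrable_stdPdf_mul (continuous_stdCdf.comp (by fun_prop))
      (fun x => stdCdf_nonneg _) (fun x => stdCdf_le_one _)).integrableOn
  rw [integral_sub hint1 hint2]
  rfl

lemma integral_copula_diag {ρ : ℝ} :
    (∫ u in (0:ℝ)..1, normCopula u u ρ) = funA ρ := by
  have := integral_quantile (fun z => binCdf z z ρ)
  exact this

lemma integral_copula_anti {ρ : ℝ} (hρ : ρ ∈ Set.Ioo (-1:ℝ) 1) :
    (∫ u in (0:ℝ)..1, normCopula u (1-u) ρ) = 1/2 - funA (-ρ) := by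
  have hρn : -ρ ∈ Set.Ioo (-1:ℝ) 1 := ⟨by linarith [hρ.2], by linarith [hρ.1]⟩
  have h1 : (∫ u in (0:ℝ)..1, normCopula u (1-u) ρ) =
      ∫ u in (0:ℝ)..1, binCdf (stdQuantile u) (-(stdQuantile u)) ρ := by
    rw [intervalIntegral.integral_of_le zero_le_one,
      intervalIntegral.integral_of_le zero_le_one,
      integral_Ioc_eq_integral_Ioo, integral_Ioc_eq_integral_Ioo]
    refine setIntegral_congr_fun measurableSet_Ioo (fun u hu => ?_)
    unfold normCopula
    congr 1
    have h2 : 1 - u = stdCdf (-(stdQuantile u)) := by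
      rw [stdCdf_neg, stdCdf_stdQuantile hu]
    rw [h2, stdQuantile_stdCdf]
  rw [h1]
  have h3 := integral_quantile (fun z => binCdf z (-z) ρ)
  rw [h3]
  have h4 : (fun z => stdPdf z * binCdf z (-z) ρ) =
      fun z => stdPdf z * stdCdf z - stdPdf z * binCdf z z (-ρ) := by
    funext z
    rw [binCdf_anti hρ z]
    ring
  rw [h4]
  have hint1 : Integrable (fun z => stdPdf z * stdCdf z) :=
    integrable_stdPdf_mul continuous_stdCdf (fun x => stdCdf_nonneg _)
      (fun x => stdCdf_le_one _)
  have hint2 : Integrable (fun z => stdPdf z * binCdf z z (-ρ)) :=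
    integrable_stdPdf_mul_binCdf hρn
  rw [integral_sub hint1 hint2]
  have h5 : (∫ z, stdPdf z * stdCdf z) = 1/2 := by
    have h := integral_phi_Phi_pow 1
    simp only [pow_one] at h
    rw [h]; norm_num
  rw [h5]
  rfl

lemma sqrt_four : Real.sqrt 4 = 2 := by
  rw [show (4:ℝ) = 2^2 by norm_num, Real.sqrt_sq (by norm_num : (0:ℝ) ≤ 2)]

lemma hasDerivAt_arcsinA {r : ℝ} (hr : r ∈ Set.Ioo (-1:ℝ) 1) :
    HasDerivAt (fun r => Real.arcsin ((1+r)/2)) ((Real.sqrt ((1-r)*(3+r)))⁻¹) r := by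
  have h1m : (0:ℝ) < 1 - r := by linarith [hr.2]
  have h1p : (0:ℝ) < 1 + r := by linarith [hr.1]
  have h3 : (0:ℝ) < (1-r)*(3+r) := by nlinarith
  have hu1 : (1+r)/2 ≠ -1 := by intro h; rw [div_eq_iff (by norm_num : (2:ℝ) ≠ 0)] at h; linarith
  have hu2 : (1+r)/2 ≠ 1 := by intro h; rw [div_eq_iff (by norm_num : (2:ℝ) ≠ 0)] at h; linarith
  have hinner : HasDerivAt (fun r : ℝ => (1+r)/2) (1/2) r := by
    simpa using ((hasDerivAt_id r).const_add 1).div_const 2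
  have harc := (Real.hasDerivAt_arcsin hu1 hu2).comp r hinner
  convert harc using 1
  rfl
  rfl
  rfl
  rw [show 1 - ((1+r)/2)^2 = ((1-r)*(3+r))/4 by ring, Real.sqrt_div h3.le, sqrt_four]
  have hne : Real.sqrt ((1-r)*(3+r)) ≠ 0 := by positivity
  field_simp

lemma hasDerivAt_arcsinB {r : ℝ} (hr : r ∈ Set.Ioo (-1:ℝ) 1) :
    HasDerivAt (fun r => Real.arcsin ((1-r)/2)) (-(Real.sqrt ((1+r)*(3-r)))⁻¹) r := by
  have h1m : (0:ℝ) < 1 - r := by linarith [hr.2]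
  have h1p : (0:ℝ) < 1 + r := by linarith [hr.1]
  have h3 : (0:ℝ) < (1+r)*(3-r) := by nlinarith
  have hu1 : (1-r)/2 ≠ -1 := by intro h; rw [div_eq_iff (by norm_num : (2:ℝ) ≠ 0)] at h; linarith
  have hu2 : (1-r)/2 ≠ 1 := by intro h; rw [div_eq_iff (by norm_num : (2:ℝ) ≠ 0)] at h; linarith
  have hinner : HasDerivAt (fun r : ℝ => (1-r)/2) (-(1/2)) r := by
    have h := ((hasDerivAt_id r).neg.const_add 1).div_const 2
    have heq : (fun x : ℝ => (1 + (-id : ℝ → ℝ) x)/2) = fun r : ℝ => (1-r)/2 := by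
      funext t; simp; ring
    rw [heq] at h
    convert h using 1
    rfl
    rfl
    norm_num
  have harc := (Real.hasDerivAt_arcsin hu1 hu2).comp r hinner
  convert harc using 1
  rfl
  rfl
  rfl
  rw [show 1 - ((1-r)/2)^2 = ((1+r)*(3-r))/4 by ring, Real.sqrt_div h3.le, sqrt_four]
  have hne : Real.sqrt ((1+r)*(3-r)) ≠ 0 := by positivity
  field_simp

lemma hasDerivAt_arcsinC {r : ℝ} (hr : r ∈ Set.Ioo (-1:ℝ) 1) :
    HasDerivAt (fun r => Real.arcsin (Real.sqrt (1+r)/2))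
      ((2 * Real.sqrt ((1+r)*(3-r)))⁻¹) r := by
  have h1m : (0:ℝ) < 1 - r := by linarith [hr.2]
  have h1p : (0:ℝ) < 1 + r := by linarith [hr.1]
  have h3 : (0:ℝ) < (1+r)*(3-r) := by nlinarith
  have hinner1 : HasDerivAt (fun r : ℝ => 1 + r) 1 r := by
    simpa using (hasDerivAt_id r).const_add 1
  have hsq : HasDerivAt (fun r : ℝ => Real.sqrt (1+r)) (1/(2*Real.sqrt (1+r)) * 1) r :=
    (Real.hasDerivAt_sqrt h1p.ne').comp r hinner1
  have hdiv := hsq.div_const 2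
  have hu1 : Real.sqrt (1+r)/2 ≠ -1 := by
    have := Real.sqrt_nonneg (1+r); intro h; rw [div_eq_iff (by norm_num : (2:ℝ) ≠ 0)] at h
    linarith
  have hu2 : Real.sqrt (1+r)/2 ≠ 1 := by
    have hlt : Real.sqrt (1+r) < 2 := by
      rw [← sqrt_four]
      exact Real.sqrt_lt_sqrt h1p.le (by linarith [hr.2])
    intro h; rw [div_eq_iff (by norm_num : (2:ℝ) ≠ 0)] at h; linarith
  have harc := (Real.hasDerivAt_arcsin hu1 hu2).comp r hdiv
  convert harc using 1
  rfl
  rfl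
  rfl
  have e0 : 1 - (Real.sqrt (1+r)/2)^2 = (3-r)/4 := by
    rw [div_pow, Real.sq_sqrt h1p.le]; ring
  rw [e0, Real.sqrt_div (by linarith : (0:ℝ) ≤ 3-r), sqrt_four,
    Real.sqrt_mul h1p.le]
  have hne1 : Real.sqrt (1+r) ≠ 0 := Real.sqrt_ne_zero'.2 h1p
  have hne2 : Real.sqrt (3-r) ≠ 0 := Real.sqrt_ne_zero'.2 (by linarith)
  field_simp

lemma hasDerivAt_arcsinD {r : ℝ} (hr : r ∈ Set.Ioo (-1:ℝ) 1) :
    HasDerivAt (fun r => Real.arcsin (Real.sqrt (1-r)/2))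
      (-(2 * Real.sqrt ((1-r)*(3+r)))⁻¹) r := by
  have h1m : (0:ℝ) < 1 - r := by linarith [hr.2]
  have h1p : (0:ℝ) < 1 + r := by linarith [hr.1]
  have h3 : (0:ℝ) < (1-r)*(3+r) := by nlinarith
  have hinner1 : HasDerivAt (fun r : ℝ => 1 - r) (-1) r := by
    have h := (hasDerivAt_id r).neg.const_add 1
    have heq : (fun x : ℝ => 1 + (-id : ℝ → ℝ) x) = fun r : ℝ => 1 - r := by
      funext t; simp; ring
    rw [heq] at h
    exact h
  have hsq : HasDerivAt (fun r : ℝ => Real.sqrt (1-r)) (1/(2*Real.sqrt (1-r)) * (-1)) r :=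
    (Real.hasDerivAt_sqrt h1m.ne').comp r hinner1
  have hdiv := hsq.div_const 2
  have hu1 : Real.sqrt (1-r)/2 ≠ -1 := by
    have := Real.sqrt_nonneg (1-r); intro h; rw [div_eq_iff (by norm_num : (2:ℝ) ≠ 0)] at h
    linarith
  have hu2 : Real.sqrt (1-r)/2 ≠ 1 := by
    have hlt : Real.sqrt (1-r) < 2 := by
      rw [← sqrt_four]
      exact Real.sqrt_lt_sqrt h1m.le (by linarith [hr.1])
    intro h; rw [div_eq_iff (by norm_num : (2:ℝ) ≠ 0)] at h; linarith
  have harc := (Real.hasDerivAt_arcsin hu1 hu2).comp r hdiv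
  convert harc using 1
  rfl
  rfl
  rfl
  have e0 : 1 - (Real.sqrt (1-r)/2)^2 = (3+r)/4 := by
    rw [div_pow, Real.sq_sqrt h1m.le]; ring
  rw [e0, Real.sqrt_div (by linarith : (0:ℝ) ≤ 3+r), sqrt_four,
    Real.sqrt_mul h1m.le]
  have hne1 : Real.sqrt (1-r) ≠ 0 := Real.sqrt_ne_zero'.2 h1m
  have hne2 : Real.sqrt (3+r) ≠ 0 := Real.sqrt_ne_zero'.2 (by linarith)
  field_simp

lemma arcsin_identity {ρ : ℝ} (hρ : ρ ∈ Set.Ioo (-1:ℝ) 1) :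
    Real.arcsin ((1+ρ)/2) - Real.arcsin ((1-ρ)/2) =
      2 * (Real.arcsin (Real.sqrt (1+ρ)/2) - Real.arcsin (Real.sqrt (1-ρ)/2)) := by
  have h0 : (0:ℝ) ∈ Set.Ioo (-1:ℝ) 1 := by constructor <;> norm_num
  have key := const_on_Ioo (f := fun r =>
    Real.arcsin ((1+r)/2) - Real.arcsin ((1-r)/2) -
      2 * (Real.arcsin (Real.sqrt (1+r)/2) - Real.arcsin (Real.sqrt (1-r)/2))) ?_ hρ h0
  · rw [show (1+(0:ℝ))/2 = 1/2 by norm_num, show (1-(0:ℝ))/2 = 1/2 by norm_num,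
      show (1:ℝ)+0 = 1 by norm_num, show (1:ℝ)-0 = 1 by norm_num] at key
    simp at key
    linarith [key]
  · intro x hx
    have hd := ((hasDerivAt_arcsinA hx).sub (hasDerivAt_arcsinB hx)).sub
      (((hasDerivAt_arcsinC hx).sub (hasDerivAt_arcsinD hx)).const_mul 2)
    convert hd using 1
    rfl
    rfl
    rfl
    rw [mul_inv, mul_inv]
    ring

theorem gini_gamma (ρ : ℝ) (hρ : ρ ∈ Set.Ioo (-1 : ℝ) 1) :
    4 * ((∫ u in (0 : ℝ)..1, normCopula u u ρ) +
        (∫ u in (0 : ℝ)..1, normCopula u (1 - u) ρ) - 1 / 2) =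
      (2 / Real.pi) * (Real.arcsin ((1 + ρ) / 2) - Real.arcsin ((1 - ρ) / 2)) ∧
    4 * ((∫ u in (0 : ℝ)..1, normCopula u u ρ) +
        (∫ u in (0 : ℝ)..1, normCopula u (1 - u) ρ) - 1 / 2) =
      (4 / Real.pi) * (Real.arcsin (Real.sqrt (1 + ρ) / 2) -
        Real.arcsin (Real.sqrt (1 - ρ) / 2)) := by
  have hρn : -ρ ∈ Set.Ioo (-1:ℝ) 1 := ⟨by linarith [hρ.2], by linarith [hρ.1]⟩
  have h1 : (∫ u in (0:ℝ)..1, normCopula u u ρ) = funA ρ := integral_copula_diag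
  have h2 : (∫ u in (0:ℝ)..1, normCopula u (1-u) ρ) = 1/2 - funA (-ρ) :=
    integral_copula_anti hρ
  have hA1 : funA ρ = 1/4 + Real.arcsin ((1+ρ)/2)/(2*Real.pi) := funA_eq hρ
  have hA2 : funA (-ρ) = 1/4 + Real.arcsin ((1-ρ)/2)/(2*Real.pi) := by
    have h := funA_eq hρn
    rw [show (1+(-ρ))/2 = (1-ρ)/2 by ring] at h
    exact h
  have hπ : Real.pi ≠ 0 := Real.pi_ne_zero
  have hid := arcsin_identity hρ
  constructor
  · rw [h1, h2, hA1, hA2]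
    field_simp
    ring
  · rw [h1, h2, hA1, hA2]
    linear_combination (2/Real.pi) * hid
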